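/- Let h, μ ≥ 2, n = h(h−1)μ + 1, X = {0,1}, A* = {x ∈ N : x mod n ∈ {μ, hμ}}, A = A* ∪ X. Then A is an asymptotic basis for N with G(A) ≤ 2h + μ − 4, while G(A∖X) = h(h−1)μ; consequently there exist asymptotic bases A of order h' with a two-element subset X such that μ(A,X) = μ and G(A∖X)/(μ h'²) → 1/4 as h' → ∞. -/

import Mathlib

open Filter Set Pointwise

/-- `nfold A h` is the `h`-fold sumset of `A` (sums of exactly `h` elements). -/
def nfold (A : Set ℤ) : ℕ → Set ℤ
  | 0 => {0}
  | n + 1 => A + nfold A n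

/-- The `h`-fold sumset of `A` contains all sufficiently large naturals. -/
def CoversAt (A : Set ℤ) (h : ℕ) : Prop :=
  ∀ᶠ m : ℕ in Filter.atTop, (m : ℤ) ∈ nfold A h

/-- `A` is an asymptotic basis for ℕ. -/
def IsAsympBasis (A : Set ℤ) : Prop := ∃ h, CoversAt A h

/-- The order `G(A)` of an asymptotic basis. -/
noncomputable def basisOrder (A : Set ℤ) : ℕ := sInf {h | CoversAt A h}

/-- Lower asymptotic density of a set of integers. -/
noncomputable def lowerDensity (S : Set ℤ) : ℝ :=
  Filter.liminf (fun n : ℕ => ((S ∩ Set.Icc 1 (n : ℤ)).ncard : ℝ) / n) Filter.atTop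

/-- Diameter of a set of integers. -/
noncomputable def diam (S : Set ℤ) : ℤ := sSup S - sInf S

/-- `h`-fold sumset in `ZMod n`. -/
def nfoldZ {n : ℕ} (A : Set (ZMod n)) : ℕ → Set (ZMod n)
  | 0 => {0}
  | t + 1 => A + nfoldZ A t

namespace Aux

def Ast (n h μ : ℕ) : Set ℤ :=
  {x : ℤ | 0 ≤ x ∧ (x % (n : ℤ) = (μ : ℤ) ∨ x % (n : ℤ) = (h : ℤ) * (μ : ℤ))}

def Afull (n h μ : ℕ) : Set ℤ := Ast n h μ ∪ {0, 1}

variable {h μ n : ℕ}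

lemma n_pos (hn : n = h * (h - 1) * μ + 1) : 0 < n := by omega

lemma hmu_lt_n (hh : 2 ≤ h) (hμ : 2 ≤ μ) (hn : n = h * (h - 1) * μ + 1) : h * μ < n := by
  have h1 : 1 ≤ h - 1 := by omega
  have h2 : h * μ ≤ h * (h - 1) * μ := by
    calc h * μ = h * 1 * μ := by ring
    _ ≤ h * (h - 1) * μ := Nat.mul_le_mul (Nat.mul_le_mul le_rfl h1) le_rfl
  omega

lemma mu_lt_n (hh : 2 ≤ h) (hμ : 2 ≤ μ) (hn : n = h * (h - 1) * μ + 1) : μ < n := by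
  have h2 := hmu_lt_n hh hμ hn
  have h3 : 1 * μ ≤ h * μ := Nat.mul_le_mul (by omega) le_rfl
  omega

lemma mem_Ast_mu (hh : 2 ≤ h) (hμ : 2 ≤ μ) (hn : n = h * (h - 1) * μ + 1)
    {k : ℤ} (hk : 0 ≤ k) : ((μ : ℤ) + k * n) ∈ Ast n h μ := by
  have h1 : (μ : ℤ) < n := by exact_mod_cast mu_lt_n hh hμ hn
  have h0 : (0 : ℤ) < n := by exact_mod_cast n_pos hn
  refine ⟨by positivity, Or.inl ?_⟩
  have : ((μ : ℤ) + k * n) % n = (μ : ℤ) % n := by simp [Int.add_mul_emod_self_left]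
  rw [this, Int.emod_eq_of_lt (by positivity) h1]

lemma mem_Ast_hmu (hh : 2 ≤ h) (hμ : 2 ≤ μ) (hn : n = h * (h - 1) * μ + 1)
    {k : ℤ} (hk : 0 ≤ k) : ((h : ℤ) * μ + k * n) ∈ Ast n h μ := by
  have h1 : (h : ℤ) * μ < n := by exact_mod_cast hmu_lt_n hh hμ hn
  have h0 : (0 : ℤ) < n := by exact_mod_cast n_pos hn
  refine ⟨by positivity, Or.inr ?_⟩
  have : ((h : ℤ) * μ + k * n) % n = ((h : ℤ) * μ) % n := by simp [Int.add_mul_emod_self_left]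
  rw [this, Int.emod_eq_of_lt (by positivity) h1]

lemma add_mem_nfold {A : Set ℤ} {x y : ℤ} {t : ℕ} (hx : x ∈ A) (hy : y ∈ nfold A t) :
    x + y ∈ nfold A (t + 1) := Set.add_mem_add hx hy

lemma sum_mem_nfold_Ast (hh : 2 ≤ h) (hμ : 2 ≤ μ) (hn : n = h * (h - 1) * μ + 1)
    (t a b : ℕ) (k : ℤ) (hab : a + b = t) (ht : 1 ≤ t) (hk : 0 ≤ k) :
    ((a : ℤ) * μ + b * (h * μ) + k * n) ∈ nfold (Ast n h μ) t := by
  induction t generalizing a b k with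
  | zero => omega
  | succ t ih =>
    rcases Nat.eq_zero_or_pos t with ht0 | ht1
    · subst ht0
      -- single element
      rcases Nat.eq_zero_or_pos a with ha | ha
      · have hb : b = 1 := by omega
        subst ha hb
        have hm := mem_Ast_hmu hh hμ hn hk
        have : ((0 : ℕ) : ℤ) * μ + (1 : ℕ) * (h * μ) + k * n = ((h : ℤ) * μ + k * n) + 0 := by
          push_cast; ring
        rw [this]
        exact add_mem_nfold hm rfl
      · have ha1 : a = 1 ∧ b = 0 := by omega
        obtain ⟨ha1, hb0⟩ := ha1; subst ha1 hb0
        have hm := mem_Ast_mu hh hμ hn hk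
        have : ((1 : ℕ) : ℤ) * μ + ((0 : ℕ) : ℤ) * (h * μ) + k * n = ((μ : ℤ) + k * n) + 0 := by
          push_cast; ring
        rw [this]
        exact add_mem_nfold hm rfl
    · rcases Nat.eq_zero_or_pos a with ha | ha
      · have hb : 1 ≤ b := by omega
        have hm := mem_Ast_hmu hh hμ hn (le_refl (0:ℤ))
        have hrec := ih a (b - 1) k (by omega) ht1 hk
        have : ((a : ℤ)) * μ + (b : ℤ) * (h * μ) + k * n =
            ((h : ℤ) * μ + 0 * n) + ((a : ℤ) * μ + ((b - 1 : ℕ) : ℤ) * (h * μ) + k * n) := by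
          push_cast [Nat.cast_sub hb]; ring
        rw [this]
        exact add_mem_nfold hm hrec
      · have hm := mem_Ast_mu hh hμ hn (le_refl (0:ℤ))
        have hrec := ih (a - 1) b k (by omega) ht1 hk
        have : ((a : ℤ)) * μ + (b : ℤ) * (h * μ) + k * n =
            ((μ : ℤ) + 0 * n) + (((a - 1 : ℕ) : ℤ) * μ + (b : ℤ) * (h * μ) + k * n) := by
          push_cast [Nat.cast_sub ha]; ring
        rw [this]
        exact add_mem_nfold hm hrec

lemma zero_mem_Afull : (0 : ℤ) ∈ Afull n h μ := Or.inr (Or.inl rfl)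

lemma one_mem_Afull : (1 : ℤ) ∈ Afull n h μ := Or.inr (Or.inr rfl)

lemma Ast_subset_Afull : Ast n h μ ⊆ Afull n h μ := Set.subset_union_left

lemma sum_mem_nfold_Afull (hh : 2 ≤ h) (hμ : 2 ≤ μ) (hn : n = h * (h - 1) * μ + 1)
    (t a b c : ℕ) (k : ℤ) (habc : a + b + c ≤ t) (hab : 1 ≤ a + b) (hk : 0 ≤ k) :
    ((a : ℤ) * μ + b * (h * μ) + c + k * n) ∈ nfold (Afull n h μ) t := by
  induction t generalizing a b c k with
  | zero => omega
  | succ t ih =>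
    rcases Nat.lt_or_ge (a + b + c) (t + 1) with hlt | hge
    · -- pad with a zero
      have hrec := ih a b c k (by omega) hab hk
      have : ((a : ℤ)) * μ + (b : ℤ) * (h * μ) + c + k * n =
          0 + (((a : ℤ)) * μ + (b : ℤ) * (h * μ) + c + k * n) := by ring
      rw [this]
      exact add_mem_nfold zero_mem_Afull hrec
    · have heq : a + b + c = t + 1 := by omega
      rcases Nat.eq_zero_or_pos c with hc | hc
      · subst hc
        rcases Nat.eq_zero_or_pos t with ht0 | ht1
        · subst ht0  -- single element
          rcases Nat.eq_zero_or_pos a with ha | ha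
          · have hb : b = 1 := by omega
            subst ha hb
            have hm := Ast_subset_Afull (mem_Ast_hmu hh hμ hn hk)
            have : ((0:ℕ):ℤ) * μ + ((1:ℕ):ℤ) * (h * μ) + ((0:ℕ):ℤ) + k * n =
                ((h : ℤ) * μ + k * n) + 0 := by push_cast; ring
            rw [this]; exact add_mem_nfold hm rfl
          · have : a = 1 ∧ b = 0 := by omega
            obtain ⟨ha1, hb0⟩ := this; subst ha1 hb0
            have hm := Ast_subset_Afull (mem_Ast_mu hh hμ hn hk)
            have : ((1:ℕ):ℤ) * μ + ((0:ℕ):ℤ) * (h * μ) + ((0:ℕ):ℤ) + k * n =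
                ((μ : ℤ) + k * n) + 0 := by push_cast; ring
            rw [this]; exact add_mem_nfold hm rfl
        · rcases Nat.eq_zero_or_pos a with ha | ha
          · have hb : 1 ≤ b := by omega
            have hm := Ast_subset_Afull (mem_Ast_hmu hh hμ hn (le_refl (0:ℤ)))
            have hrec := ih a (b-1) 0 k (by omega) (by omega) hk
            have : ((a : ℤ)) * μ + (b : ℤ) * (h * μ) + ((0:ℕ):ℤ) + k * n =
                ((h:ℤ) * μ + 0 * n) + ((a : ℤ) * μ + ((b-1 : ℕ) : ℤ) * (h * μ) + ((0:ℕ):ℤ) + k * n) := by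
              push_cast [Nat.cast_sub hb]; ring
            rw [this]; exact add_mem_nfold hm hrec
          · have hm := Ast_subset_Afull (mem_Ast_mu hh hμ hn (le_refl (0:ℤ)))
            have hrec := ih (a-1) b 0 k (by omega) (by omega) hk
            have : ((a : ℤ)) * μ + (b : ℤ) * (h * μ) + ((0:ℕ):ℤ) + k * n =
                ((μ:ℤ) + 0 * n) + (((a-1 : ℕ) : ℤ) * μ + (b : ℤ) * (h * μ) + ((0:ℕ):ℤ) + k * n) := by
              push_cast [Nat.cast_sub ha]; ring
            rw [this]; exact add_mem_nfold hm hrec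
      · -- use a one
        have hrec := ih a b (c-1) k (by omega) hab hk
        have : ((a : ℤ)) * μ + (b : ℤ) * (h * μ) + c + k * n =
            1 + ((a : ℤ) * μ + (b : ℤ) * (h * μ) + ((c-1 : ℕ) : ℤ) + k * n) := by
          push_cast [Nat.cast_sub hc]; ring
        rw [this]; exact add_mem_nfold one_mem_Afull hrec


lemma Ast_decomp (hn : n = h * (h - 1) * μ + 1) {x : ℤ} (hx : x ∈ Ast n h μ) :
    ∃ k : ℤ, 0 ≤ k ∧ (x = (μ : ℤ) + k * n ∨ x = (h : ℤ) * μ + k * n) := by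
  obtain ⟨hx0, hxmod⟩ := hx
  have hn0 : (0:ℤ) < n := by exact_mod_cast n_pos hn
  refine ⟨x / n, Int.ediv_nonneg hx0 (le_of_lt hn0), ?_⟩
  have hdm := Int.emod_add_mul_ediv x n
  rcases hxmod with h1 | h1
  · left; rw [← h1]; linarith [hdm]
  · right; rw [← h1]; linarith [hdm]

lemma nfold_Ast_elim (hn : n = h * (h - 1) * μ + 1) {t : ℕ} {m : ℤ}
    (hm : m ∈ nfold (Ast n h μ) t) :
    ∃ (a b : ℕ) (k : ℤ), a + b = t ∧ 0 ≤ k ∧ m = (a : ℤ) * μ + b * (h * μ) + k * n := by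
  induction t generalizing m with
  | zero =>
    refine ⟨0, 0, 0, rfl, le_rfl, ?_⟩
    have : m = 0 := hm
    simp [this]
  | succ t ih =>
    obtain ⟨x, hx, y, hy, hxy⟩ := Set.mem_add.1 hm
    obtain ⟨a, b, k, hab, hk, hyeq⟩ := ih hy
    obtain ⟨k', hk', hx'⟩ := Ast_decomp hn hx
    rcases hx' with hx' | hx'
    · exact ⟨a + 1, b, k + k', by omega, by omega, by rw [← hxy, hx', hyeq]; push_cast; ring⟩
    · exact ⟨a, b + 1, k + k', by omega, by omega, by rw [← hxy, hx', hyeq]; push_cast; ring⟩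

lemma nfold_Afull_elim (hn : n = h * (h - 1) * μ + 1) {t : ℕ} {m : ℤ}
    (hm : m ∈ nfold (Afull n h μ) t) :
    ∃ (a b c : ℕ) (k : ℤ), a + b + c ≤ t ∧ 0 ≤ k ∧
      m = (a : ℤ) * μ + b * (h * μ) + c + k * n ∧ (a + b = 0 → k = 0) := by
  induction t generalizing m with
  | zero =>
    refine ⟨0, 0, 0, 0, le_rfl, le_rfl, ?_, fun _ => rfl⟩
    have : m = 0 := hm
    simp [this]
  | succ t ih =>
    obtain ⟨x, hx, y, hy, hxy⟩ := Set.mem_add.1 hm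
    obtain ⟨a, b, c, k, habc, hk, hyeq, hz⟩ := ih hy
    rcases hx with hx | hx
    · obtain ⟨k', hk', hx'⟩ := Ast_decomp hn hx
      rcases hx' with hx' | hx'
      · exact ⟨a + 1, b, c, k + k', by omega, by omega,
          by rw [← hxy, hx', hyeq]; push_cast; ring, by omega⟩
      · exact ⟨a, b + 1, c, k + k', by omega, by omega,
          by rw [← hxy, hx', hyeq]; push_cast; ring, by omega⟩
    · rcases hx with hx | hx
    -- x = 0 or x = 1
      · refine ⟨a, b, c, k, by omega, hk, ?_, hz⟩
        rw [← hxy, hyeq, hx]; ring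
      · refine ⟨a, b, c + 1, k, by omega, hk, ?_, hz⟩
        have hx1 : x = 1 := hx
        rw [← hxy, hyeq, hx1]; push_cast; ring

lemma residue_rep (hh : 2 ≤ h) (hμ : 2 ≤ μ) (hn : n = h * (h - 1) * μ + 1)
    (r : ℕ) (hr : r < n) :
    ∃ a b c e : ℕ, e ≤ 1 ∧ 1 ≤ a + b ∧ a + b + c ≤ 2 * h + μ - 4 ∧
      a * μ + b * (h * μ) + c = r + e * n := by
  have key : n = (h - 1) * (h * μ) + 1 := by rw [hn]; ring
  rcases Nat.lt_or_ge r (μ - 1) with h1 | h1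
  · -- r ≤ μ - 2 : (0, h-1, r+1), e = 1
    refine ⟨0, h - 1, r + 1, 1, le_rfl, by omega, by omega, by omega⟩
  rcases Nat.eq_or_lt_of_le h1 with h2 | h2
  · -- r = μ - 1 : (1, h-1, 0), e = 1
    refine ⟨1, h - 1, 0, 1, le_rfl, by omega, by omega, by omega⟩
  -- now μ ≤ r
  have hμr : μ ≤ r := by omega
  rcases Nat.eq_or_lt_of_le (by omega : r + 1 ≤ n) with h3 | h3
  · -- r = n - 1 : (0, h-1, 0), e = 0
    refine ⟨0, h - 1, 0, 0, by omega, by omega, by omega, by omega⟩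
  -- μ ≤ r ≤ n - 2
  set q := r / μ with hqdef
  set s := r % μ with hsdef
  have hqs : μ * q + s = r := Nat.div_add_mod r μ
  have hq1 : 1 ≤ q := Nat.one_le_div_iff (by omega) |>.2 hμr
  have hsμ : s < μ := Nat.mod_lt _ (by omega)
  have keyq : μ * (h * (h - 1)) = (h - 1) * (h * μ) := by ring
  have hqP : q < h * (h - 1) := by
    by_contra hc
    push_neg at hc
    have hq2 : μ * (h * (h - 1)) ≤ μ * q := Nat.mul_le_mul_left μ hc
    have hq3 : μ * (h * (h - 1)) = (h - 1) * (h * μ) := by ring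
    omega
  have hbh : q / h ≤ h - 2 := by
    have : q ≤ h * (h - 1) - 1 := by omega
    have h5 : q / h ≤ (h * (h - 1) - 1) / h := Nat.div_le_div_right this
    have h6 : (h * (h - 1) - 1) / h = h - 2 := by
      have h7 : h * (h - 1) - 1 = h * (h - 2) + (h - 1) := by
        have : h * (h - 1) = h * (h - 2) + h := by
          have : h - 1 = (h - 2) + 1 := by omega
          rw [this]; ring
        omega
      rw [h7, Nat.add_comm, Nat.add_mul_div_left _ _ (by omega : 0 < h)]
      have : (h - 1) / h = 0 := Nat.div_eq_of_lt (by omega)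
      omega
    omega
  have hmod : q % h + h * (q / h) = q := Nat.mod_add_div q h
  have hmlt : q % h < h := Nat.mod_lt _ (by omega)
  refine ⟨q % h, q / h, s, 0, by omega, ?_, by omega, ?_⟩
  · rcases Nat.eq_zero_or_pos (q / h) with h0 | h0
    · have h9 := hmod
      rw [h0, Nat.mul_zero] at h9
      omega
    · omega
  · have : (q % h) * μ + (q / h) * (h * μ) = q * μ := by
      calc (q % h) * μ + (q / h) * (h * μ) = (q % h + h * (q / h)) * μ := by ring
      _ = q * μ := by rw [hmod]
    rw [this]
    have : q * μ = μ * q := by ring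
    omega


lemma covers_mono {A : Set ℤ} (h0 : (0 : ℤ) ∈ A) {s t : ℕ} (hst : s ≤ t)
    (hc : CoversAt A s) : CoversAt A t := by
  obtain ⟨d, rfl⟩ := Nat.exists_eq_add_of_le hst
  induction d with
  | zero => exact hc
  | succ d ih =>
    have he : s + (d + 1) = (s + d) + 1 := by omega
    rw [he]
    refine (ih (by omega)).mono fun m hm => ?_
    rw [← zero_add (m : ℤ)]
    exact add_mem_nfold h0 hm

lemma coversAfull (hh : 2 ≤ h) (hμ : 2 ≤ μ) (hn : n = h * (h - 1) * μ + 1) :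
    CoversAt (Afull n h μ) (2 * h + μ - 4) := by
  rw [CoversAt, eventually_atTop]
  refine ⟨2 * n, fun m hm => ?_⟩
  have hn0 : 0 < n := n_pos hn
  obtain ⟨a, b, c, e, he, hab, habc, heq⟩ := residue_rep hh hμ hn (m % n) (Nat.mod_lt _ hn0)
  have hdiv2 : 2 ≤ m / n := (Nat.le_div_iff_mul_le hn0).2 (by omega)
  have hmod : n * (m / n) + m % n = m := Nat.div_add_mod m n
  set k : ℤ := ((m / n : ℕ) : ℤ) - e with hkdef
  have hk : 0 ≤ k := by
    rw [hkdef]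
    have h1 : (e : ℤ) ≤ 1 := by exact_mod_cast he
    have h2 : (2 : ℤ) ≤ ((m / n : ℕ) : ℤ) := by exact_mod_cast hdiv2
    linarith
  have hmem := sum_mem_nfold_Afull hh hμ hn (2 * h + μ - 4) a b c k habc hab hk
  have hfin : (m : ℤ) = (a : ℤ) * μ + b * (h * μ) + c + k * n := by
    have h1 : ((a * μ + b * (h * μ) + c : ℕ) : ℤ) = ((m % n : ℕ) : ℤ) + (e : ℤ) * n := by
      exact_mod_cast heq
    have h2 : ((n : ℤ)) * ((m / n : ℕ) : ℤ) + ((m % n : ℕ) : ℤ) = (m : ℤ) := by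
      exact_mod_cast hmod
    rw [hkdef]
    push_cast at h1 h2 ⊢
    linarith
  rw [hfin]
  exact hmem

set_option maxHeartbeats 1000000 in
lemma coversAst (hh : 2 ≤ h) (hμ : 2 ≤ μ) (hn : n = h * (h - 1) * μ + 1) :
    CoversAt (Ast n h μ) (h * (h - 1) * μ) := by
  rw [CoversAt, eventually_atTop]
  refine ⟨2 * (n * (h * μ)), fun m hm => ?_⟩
  have hn0 : (0 : ℤ) < n := by exact_mod_cast n_pos hn
  have hnz : (h : ℤ) * ((h : ℤ) - 1) * μ = (n : ℤ) - 1 := by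
    have h1 : ((h - 1 : ℕ) : ℤ) = (h : ℤ) - 1 := by push_cast [Nat.cast_sub (by omega : 1 ≤ h)]; ring
    rw [← h1]
    push_cast [hn]
    ring
  have hB0 : 0 ≤ ((((n : ℤ) - 1) * μ - m) * h) % n := Int.emod_nonneg _ (ne_of_gt hn0)
  have hBlt : ((((n : ℤ) - 1) * μ - m) * h) % n < n := Int.emod_lt_of_pos _ hn0
  have hB' : ((((n : ℤ) - 1) * μ - m) * h) % n =
      (((n : ℤ) - 1) * μ - m) * h - n * (((((n : ℤ) - 1) * μ - m) * h) / n) :=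
    Int.emod_def _ _
  obtain ⟨b, hbcast⟩ : ∃ b : ℕ, (b : ℤ) = ((((n : ℤ) - 1) * μ - m) * h) % n :=
    ⟨(((((n : ℤ) - 1) * μ - m) * h) % n).toNat, Int.toNat_of_nonneg hB0⟩
  have hble : b ≤ n - 1 := by
    have h2 : b < n := by exact_mod_cast hbcast ▸ hBlt
    omega
  have hacast : (((n - 1 : ℕ) - b : ℕ) : ℤ) = ((n : ℤ) - 1) - b := by
    push_cast [Nat.cast_sub hble, Nat.cast_sub (by omega : 1 ≤ n)]
    ring
  set a : ℕ := (n - 1) - b with hadef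
  set k : ℤ := ((((n : ℤ) - 1) * μ - m) * h) / n * ((h : ℤ) - 1) * μ -
      (((n : ℤ) - 1) * μ - m) with hkdef
  have key : (m : ℤ) = (a : ℤ) * μ + b * (h * μ) + k * n := by
    rw [hacast, hkdef, hbcast]
    linear_combination (-(((h : ℤ) - 1)) * (μ : ℤ)) * hB' +
      (-(((n : ℤ) - 1) * μ - m)) * hnz
  -- bound S ≤ m to get k ≥ 0
  have hSbound : (a : ℤ) * μ + b * (h * μ) ≤ m := by
    have h1 : (a : ℤ) ≤ n := by
      rw [hadef, hacast]
      linarith [hbcast ▸ hB0]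
    have h2 : (b : ℤ) ≤ n := by rw [hbcast]; linarith
    have h3 : (0 : ℤ) ≤ μ := by positivity
    have h4 : (1 : ℤ) ≤ h := by exact_mod_cast (by omega : 1 ≤ h)
    have h5 : (2 : ℤ) * (n * (h * μ)) ≤ m := by exact_mod_cast hm
    have h6 : (a : ℤ) * μ ≤ n * μ := by
      have := mul_le_mul_of_nonneg_right h1 h3
      linarith
    have h7 : (b : ℤ) * (h * μ) ≤ n * (h * μ) := by
      have h8 : (0 : ℤ) ≤ h * μ := by positivity
      have := mul_le_mul_of_nonneg_right h2 h8
      linarith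
    have h9 : (n : ℤ) * μ ≤ n * (h * μ) := by
      have : (n : ℤ) * μ * 1 ≤ n * μ * h := by
        have : (0:ℤ) ≤ n * μ := by positivity
        nlinarith
      nlinarith
    linarith
  have hk : 0 ≤ k := by
    by_contra hc
    push_neg at hc
    have hk1 : k + 1 ≤ 0 := Int.lt_iff_add_one_le.mp hc
    have : k * n ≤ -n := by nlinarith
    linarith [key, hSbound, hn0]
  have habt : a + b = h * (h - 1) * μ := by omega
  have := sum_mem_nfold_Ast hh hμ hn (h * (h - 1) * μ) a b k habt (by
    have : 2 * 1 * 2 ≤ h * (h-1) * μ := Nat.mul_le_mul (Nat.mul_le_mul hh (by omega)) hμ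
    omega) hk
  rw [key]
  exact this

lemma not_coversAst (hh : 2 ≤ h) (hμ : 2 ≤ μ) (hn : n = h * (h - 1) * μ + 1)
    {t : ℕ} (ht : t < h * (h - 1) * μ) : ¬ CoversAt (Ast n h μ) t := by
  intro hc
  haveI : NeZero n := ⟨by omega⟩
  obtain ⟨N, hN⟩ := eventually_atTop.1 hc
  set S : Finset (ZMod n) :=
    (Finset.range (t + 1)).image (fun b => (((t + b * (h - 1)) * μ : ℕ) : ZMod n)) with hSdef
  have hcard : S.card < n := by
    have h1 : S.card ≤ t + 1 := Finset.card_image_le.trans (by simp)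
    omega
  have hex : ∃ z : ZMod n, z ∉ S := by
    by_contra hcon
    push_neg at hcon
    have : S = Finset.univ := Finset.eq_univ_iff_forall.2 hcon
    rw [this, Finset.card_univ, ZMod.card] at hcard
    omega
  obtain ⟨z, hz⟩ := hex
  set m := z.val + n * (N + 1) with hmdef
  have hm : m ≥ N := by
    have h1 : n * (N + 1) ≥ 1 * (N + 1) := Nat.mul_le_mul (by omega) le_rfl
    omega
  have hmem := hN m hm
  obtain ⟨a, b, k, hab, hk, heq⟩ := nfold_Ast_elim hn hmem
  apply hz
  have hzm : ((m : ℕ) : ZMod n) = z := by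
    rw [hmdef]
    push_cast
    simp [ZMod.natCast_self, ZMod.natCast_val]
  have hcast : ((m : ℕ) : ZMod n) = ((a * μ + b * (h * μ) : ℕ) : ZMod n) := by
    have h1 := congrArg (fun x : ℤ => (x : ZMod n)) heq
    simpa [ZMod.natCast_self] using h1
  have e1 : b * (h - 1) + b * 1 = b * h := by rw [← Nat.mul_add]; congr 1; omega
  have e2 : a + b * h = t + b * (h - 1) := by omega
  have e3 : (a * μ + b * (h * μ) : ℕ) = ((t + b * (h - 1)) * μ : ℕ) := by
    rw [← e2]; ring
  rw [hSdef]
  refine Finset.mem_image.2 ⟨b, Finset.mem_range.2 (by omega), ?_⟩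
  rw [← e3, ← hcast, hzm]

lemma order_Ast (hh : 2 ≤ h) (hμ : 2 ≤ μ) (hn : n = h * (h - 1) * μ + 1) :
    basisOrder (Ast n h μ) = h * (h - 1) * μ := by
  refine le_antisymm (Nat.sInf_le (coversAst hh hμ hn)) ?_
  refine le_csInf ⟨_, coversAst hh hμ hn⟩ fun t htmem => ?_
  by_contra hc
  push_neg at hc
  exact not_coversAst hh hμ hn hc htmem


set_option maxHeartbeats 1000000 in
lemma not_coversAfull (hh5 : 5 ≤ h) (hμ : 2 ≤ μ) (hn : n = h * (h - 1) * μ + 1) :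
    ¬ CoversAt (Afull n h μ) (2 * h - 5) := by
  intro hc
  obtain ⟨d, rfl⟩ : ∃ d, h = d + 5 := ⟨h - 5, by omega⟩
  obtain ⟨u, rfl⟩ : ∃ u, μ = u + 2 := ⟨μ - 2, by omega⟩
  have h54 : d + 5 - 1 = d + 4 := by omega
  have hnlin : n = (d + 5) * (d + 4) * (u + 2) + 1 := by rw [hn, h54]
  have hX1 : 1 ≤ (d + 5) * (u + 2) := by
    have : 0 < (d + 5) * (u + 2) := by positivity
    omega
  have hn9 : 8 * d + 41 ≤ n := by
    have : (d + 5) * 4 * 2 ≤ (d + 5) * (d + 4) * (u + 2) :=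
      Nat.mul_le_mul (Nat.mul_le_mul le_rfl (by omega)) (by omega)
    omega
  obtain ⟨N, hN⟩ := eventually_atTop.1 hc
  set m := (n - 3) + n * N with hmdef
  have hm : m ≥ N := by
    have h1 : 1 * N ≤ n * N := Nat.mul_le_mul (by omega) le_rfl
    omega
  obtain ⟨a, b, c, k, habc, hk, heq, hz⟩ := nfold_Afull_elim hn (hN m hm)
  push_cast at heq
  have habc' : a + b + c ≤ 2 * d + 5 := by omega
  have hm' : (m : ℤ) = ((n : ℤ) - 3) + n * N := by
    rw [hmdef]
    push_cast [Nat.cast_sub (by omega : 3 ≤ n)]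
    ring
  rcases Nat.eq_zero_or_pos (a + b) with hab0 | hab1
  · -- only zeros and ones: m = c, too small
    have hk0 := hz hab0
    have ha0 : a = 0 := by omega
    have hb0 : b = 0 := by omega
    rw [ha0, hb0, hk0] at heq
    have : (m : ℤ) = c := by rw [heq]; push_cast; ring
    have hmc : m = c := by exact_mod_cast this
    omega
  -- the core argument
  set v := a * (u + 2) + b * ((d + 5) * (u + 2)) + c with hvdef
  have hveqz : (v : ℤ) = a * (u + 2) + b * ((d + 5) * (u + 2)) + c := by
    rw [hvdef]; push_cast; ring
  have hv2 : 2 ≤ v := by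
    rcases Nat.eq_zero_or_pos a with ha | ha
    · have hb : 1 ≤ b := by omega
      have : 1 * ((d + 5) * (u + 2)) ≤ b * ((d + 5) * (u + 2)) :=
        Nat.mul_le_mul hb le_rfl
      have h2 : 2 ≤ (d + 5) * (u + 2) := by
        have : 1 * 2 ≤ (d + 5) * (u + 2) := Nat.mul_le_mul (by omega) (by omega)
        omega
      omega
    · have : 1 * (u + 2) ≤ a * (u + 2) := Nat.mul_le_mul ha le_rfl
      omega
  have hvU : v ≤ (2 * d + 5) * ((d + 5) * (u + 2)) := by
    have h1 : a * (u + 2) ≤ a * ((d + 5) * (u + 2)) := by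
      refine Nat.mul_le_mul le_rfl ?_
      calc u + 2 = 1 * (u + 2) := by ring
      _ ≤ (d + 5) * (u + 2) := Nat.mul_le_mul (by omega) le_rfl
    have h2 : c ≤ c * ((d + 5) * (u + 2)) := by
      calc c = c * 1 := by ring
      _ ≤ c * ((d + 5) * (u + 2)) := Nat.mul_le_mul le_rfl hX1
    have h3 : a * ((d + 5) * (u + 2)) + b * ((d + 5) * (u + 2)) + c * ((d + 5) * (u + 2))
        = (a + b + c) * ((d + 5) * (u + 2)) := by ring
    have h4 : (a + b + c) * ((d + 5) * (u + 2)) ≤ (2 * d + 5) * ((d + 5) * (u + 2)) :=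
      Nat.mul_le_mul habc' le_rfl
    omega
  -- v + 3 = w * n with w = 1 or 2
  have hwz : (v : ℤ) + 3 = ((N : ℤ) + 1 - k) * n := by
    rw [hveqz]
    linear_combination hm' - heq
  have hnz0 : (0 : ℤ) < (n : ℤ) := by exact_mod_cast (by omega : 0 < n)
  have hw1 : 1 ≤ (N : ℤ) + 1 - k := by
    by_contra hcon
    push_neg at hcon
    have h1 : (N : ℤ) + 1 - k ≤ 0 := by omega
    have h2 : ((N : ℤ) + 1 - k) * n ≤ 0 := mul_nonpos_of_nonpos_of_nonneg h1 (le_of_lt hnz0)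
    have h3 : (0 : ℤ) ≤ (v : ℤ) := Int.natCast_nonneg v
    linarith
  have hw2 : (N : ℤ) + 1 - k ≤ 2 := by
    by_contra hcon
    push_neg at hcon
    have h1 : 3 ≤ (N : ℤ) + 1 - k := by omega
    have h2 : 3 * (n : ℤ) ≤ ((N : ℤ) + 1 - k) * n := by
      exact mul_le_mul_of_nonneg_right h1 (le_of_lt hnz0)
    have h3 : (v : ℤ) ≤ (2 * d + 5) * ((d + 5) * (u + 2)) := by exact_mod_cast hvU
    have h4 : (n : ℤ) = (d + 5) * (d + 4) * (u + 2) + 1 := by exact_mod_cast hnlin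
    nlinarith [mul_nonneg (show (0:ℤ) ≤ (d : ℤ) + 7 by positivity)
      (show (0:ℤ) ≤ ((d : ℤ) + 5) * ((u : ℤ) + 2) by positivity)]
  have hwcase : (N : ℤ) + 1 - k = 1 ∨ (N : ℤ) + 1 - k = 2 := by omega
  -- common divisibility machinery
  rcases hwcase with hw | hw
  · -- v = n - 3
    rw [hw, one_mul] at hwz
    have hveq : v + 3 = n := by exact_mod_cast hwz
    have he2 : a * (u + 2) + b * ((d + 5) * (u + 2)) + (c + 2) =
        (d + 5) * (d + 4) * (u + 2) := by omega
    have hdvd : (u + 2) ∣ c + 2 := by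
      have h1 : (u + 2) ∣ a * (u + 2) + b * ((d + 5) * (u + 2)) + (c + 2) := by
        rw [he2]; exact Dvd.intro_left _ rfl
      have h2 : (u + 2) ∣ a * (u + 2) + b * ((d + 5) * (u + 2)) :=
        dvd_add (Dvd.intro_left _ rfl) (by
          exact Dvd.dvd.mul_left (Dvd.intro_left _ rfl) b)
      exact (Nat.dvd_add_right h2).mp h1
    obtain ⟨j, hj⟩ := hdvd
    have hj1 : 1 ≤ j := by
      rcases Nat.eq_zero_or_pos j with h0 | h0
      · rw [h0, Nat.mul_zero] at hj; omega
      · exact h0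
    have hjd : j ≤ d + 3 := by
      have h1 : 2 * j ≤ (u + 2) * j := Nat.mul_le_mul (by omega) le_rfl
      omega
    have hqj : (a + b * (d + 5) + j) * (u + 2) = ((d + 5) * (d + 4)) * (u + 2) := by
      have h1 : (a + b * (d + 5) + j) * (u + 2)
          = a * (u + 2) + b * ((d + 5) * (u + 2)) + (u + 2) * j := by ring
      rw [h1, ← hj, he2]; try ring
    have hqj' : a + b * (d + 5) + j = (d + 5) * (d + 4) :=
      Nat.eq_of_mul_eq_mul_right (by omega) hqj
    have hbbd : b ≤ d + 3 := by
      by_contra hcon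
      push_neg at hcon
      have h1 : (d + 4) * (d + 5) ≤ b * (d + 5) := Nat.mul_le_mul (by omega) le_rfl
      have h2 : (d + 4) * (d + 5) = (d + 5) * (d + 4) := by ring
      omega
    have e5 : b * (d + 5) = b * (d + 4) + b := by ring
    have e6 : b * (d + 4) ≤ (d + 3) * (d + 4) := Nat.mul_le_mul hbbd le_rfl
    have e7 : (d + 5) * (d + 4) = (d + 3) * (d + 4) + 2 * (d + 4) := by ring
    have e8 : 2 * j ≤ (u + 2) * j := Nat.mul_le_mul (by omega) le_rfl
    omega
  · -- v = 2n - 3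
    rw [hw] at hwz
    have hveq : v + 3 = 2 * n := by exact_mod_cast hwz
    have he2 : a * (u + 2) + b * ((d + 5) * (u + 2)) + (c + 1) =
        2 * ((d + 5) * (d + 4) * (u + 2)) := by omega
    have hdvd : (u + 2) ∣ c + 1 := by
      have h1 : (u + 2) ∣ a * (u + 2) + b * ((d + 5) * (u + 2)) + (c + 1) := by
        rw [he2]
        exact Dvd.dvd.mul_left (Dvd.intro_left _ rfl) 2
      have h2 : (u + 2) ∣ a * (u + 2) + b * ((d + 5) * (u + 2)) :=
        dvd_add (Dvd.intro_left _ rfl) (by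
          exact Dvd.dvd.mul_left (Dvd.intro_left _ rfl) b)
      exact (Nat.dvd_add_right h2).mp h1
    obtain ⟨j, hj⟩ := hdvd
    have hj1 : 1 ≤ j := by
      rcases Nat.eq_zero_or_pos j with h0 | h0
      · rw [h0, Nat.mul_zero] at hj; omega
      · exact h0
    have hjd : j ≤ d + 3 := by
      have h1 : 2 * j ≤ (u + 2) * j := Nat.mul_le_mul (by omega) le_rfl
      omega
    have hqj : (a + b * (d + 5) + j) * (u + 2) = (2 * ((d + 5) * (d + 4))) * (u + 2) := by
      have h1 : (a + b * (d + 5) + j) * (u + 2)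
          = a * (u + 2) + b * ((d + 5) * (u + 2)) + (u + 2) * j := by ring
      rw [h1, ← hj, he2]; try ring
    have hqj' : a + b * (d + 5) + j = 2 * ((d + 5) * (d + 4)) :=
      Nat.eq_of_mul_eq_mul_right (by omega) hqj
    have hbbd : b ≤ 2 * d + 7 := by
      by_contra hcon
      push_neg at hcon
      have h1 : (2 * d + 8) * (d + 5) ≤ b * (d + 5) := Nat.mul_le_mul (by omega) le_rfl
      have h2 : (2 * d + 8) * (d + 5) = 2 * ((d + 5) * (d + 4)) := by ring
      omega
    have e5 : b * (d + 5) = b * (d + 4) + b := by ring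
    have e6 : b * (d + 4) ≤ (2 * d + 7) * (d + 4) := Nat.mul_le_mul hbbd le_rfl
    have e7 : 2 * ((d + 5) * (d + 4)) = (2 * d + 7) * (d + 4) + 3 * (d + 4) := by ring
    have e8 : 2 * j ≤ (u + 2) * j := Nat.mul_le_mul (by omega) le_rfl
    omega

lemma order_Afull_le (hh : 2 ≤ h) (hμ : 2 ≤ μ) (hn : n = h * (h - 1) * μ + 1) :
    basisOrder (Afull n h μ) ≤ 2 * h + μ - 4 :=
  Nat.sInf_le (coversAfull hh hμ hn)

lemma order_Afull_ge (hh5 : 5 ≤ h) (hμ : 2 ≤ μ) (hn : n = h * (h - 1) * μ + 1) :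
    2 * h - 4 ≤ basisOrder (Afull n h μ) := by
  refine le_csInf ⟨_, coversAfull (by omega) hμ hn⟩ fun t htmem => ?_
  by_contra hcon
  push_neg at hcon
  exact not_coversAfull hh5 hμ hn
    (covers_mono zero_mem_Afull (by omega) htmem)


lemma mem_Ast_ge (hh : 2 ≤ h) (hμ : 2 ≤ μ) (hn : n = h * (h - 1) * μ + 1)
    {y : ℤ} (hy : y ∈ Ast n h μ) : (μ : ℤ) ≤ y := by
  by_contra hcon
  push_neg at hcon
  obtain ⟨hy0, hmod⟩ := hy
  have hμn : (μ : ℤ) < n := by exact_mod_cast mu_lt_n hh hμ hn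
  have hself : y % (n : ℤ) = y := Int.emod_eq_of_lt hy0 (lt_trans hcon hμn)
  have hμh : (μ : ℤ) ≤ (h : ℤ) * μ := by
    have h2 : (1 : ℤ) ≤ (h : ℤ) := by exact_mod_cast (by omega : 1 ≤ h)
    nlinarith [show (0:ℤ) ≤ (μ:ℤ) by positivity]
  rcases hmod with h1 | h1 <;> rw [hself] at h1 <;> omega

lemma Afull_diff (hh : 2 ≤ h) (hμ : 2 ≤ μ) (hn : n = h * (h - 1) * μ + 1) :
    Afull n h μ \ ({0, 1} : Set ℤ) = Ast n h μ := by
  ext x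
  simp only [Afull, Set.mem_diff, Set.mem_union, Set.mem_insert_iff, Set.mem_singleton_iff]
  constructor
  · rintro ⟨h1 | h1, h2⟩
    · exact h1
    · exact absurd h1 h2
  · intro hx
    have := mem_Ast_ge hh hμ hn hx
    have hμ2 : (2 : ℤ) ≤ (μ : ℤ) := by exact_mod_cast hμ
    exact ⟨Or.inl hx, by push_neg; constructor <;> omega⟩

lemma diam_X_y {y : ℤ} (hy : (2 : ℤ) ≤ y) : diam (({0, 1} : Set ℤ) ∪ {y}) = y := by
  have hset : (({0, 1} : Set ℤ) ∪ {y}) = insert 0 (insert 1 ({y} : Set ℤ)) := by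
    ext z
    simp only [Set.mem_union, Set.mem_insert_iff, Set.mem_singleton_iff]
    tauto
  have hbdd1 : BddAbove (insert 1 ({y} : Set ℤ)) := ((Set.finite_singleton y).insert 1).bddAbove
  have hbdd1' : BddBelow (insert 1 ({y} : Set ℤ)) := ((Set.finite_singleton y).insert 1).bddBelow
  have hne : (insert 1 ({y} : Set ℤ)).Nonempty := ⟨1, Set.mem_insert _ _⟩
  rw [diam, hset]
  rw [csSup_insert hbdd1 hne, csInf_insert hbdd1' hne, csSup_insert bddAbove_singleton
    (Set.singleton_nonempty y), csInf_insert bddBelow_singleton (Set.singleton_nonempty y),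
    csSup_singleton, csInf_singleton]
  omega

lemma isLeast_diam (hh : 2 ≤ h) (hμ : 2 ≤ μ) (hn : n = h * (h - 1) * μ + 1) :
    IsLeast {m : ℤ | ∃ y ∈ Afull n h μ \ ({0, 1} : Set ℤ),
      m = diam (({0, 1} : Set ℤ) ∪ {y})} (μ : ℤ) := by
  have hμ2 : (2 : ℤ) ≤ (μ : ℤ) := by exact_mod_cast hμ
  constructor
  · refine ⟨(μ : ℤ), ?_, (diam_X_y hμ2).symm⟩
    rw [Afull_diff hh hμ hn]
    simpa using mem_Ast_mu hh hμ hn (le_refl (0 : ℤ))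
  · rintro m ⟨y, hy, rfl⟩
    rw [Afull_diff hh hμ hn] at hy
    have h1 := mem_Ast_ge hh hμ hn hy
    rw [diam_X_y (by omega)]
    exact h1

lemma lim_aux (a b c : ℝ) (hc : 0 < c) :
    Filter.Tendsto (fun i : ℕ => ((i : ℝ) + a) * ((i : ℝ) + b) / (2 * (i : ℝ) + c) ^ 2)
      Filter.atTop (nhds (1 / 4)) := by
  have ha : Tendsto (fun x : ℝ => a / x) atTop (nhds 0) := tendsto_const_nhds.div_atTop tendsto_id
  have hb : Tendsto (fun x : ℝ => b / x) atTop (nhds 0) := tendsto_const_nhds.div_atTop tendsto_id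
  have hcc : Tendsto (fun x : ℝ => c / x) atTop (nhds 0) := tendsto_const_nhds.div_atTop tendsto_id
  have h1 : Tendsto (fun x : ℝ => (1 + a / x) * (1 + b / x) / (2 + c / x) ^ 2)
      atTop (nhds (1 / 4)) := by
    have hnum : Tendsto (fun x : ℝ => (1 + a / x) * (1 + b / x)) atTop (nhds ((1 + 0) * (1 + 0))) :=
      (tendsto_const_nhds.add ha).mul (tendsto_const_nhds.add hb)
    have hden : Tendsto (fun x : ℝ => (2 + c / x) ^ 2) atTop (nhds ((2 + 0) ^ 2)) :=
      (tendsto_const_nhds.add hcc).pow 2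
    have := hnum.div hden (by norm_num)
    convert this using 2
    all_goals norm_num
  have h2 : (fun x : ℝ => (1 + a / x) * (1 + b / x) / (2 + c / x) ^ 2) =ᶠ[atTop]
      (fun x : ℝ => (x + a) * (x + b) / (2 * x + c) ^ 2) := by
    filter_upwards [eventually_gt_atTop 0] with x hx
    have hx0 : x ≠ 0 := ne_of_gt hx
    have h2xc : 2 * x + c ≠ 0 := by positivity
    field_simp
  exact (h1.congr' h2).comp tendsto_natCast_atTop_atTop

end Aux

open Aux

set_option maxHeartbeats 1000000

theorem stmt12 (h μ n : ℕ) (hh : 2 ≤ h) (hμ : 2 ≤ μ) (hn : n = h * (h - 1) * μ + 1)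
    (X Astar A : Set ℤ) (hX : X = {0, 1})
    (hAstar : Astar = {x : ℤ | 0 ≤ x ∧
      (x % (n : ℤ) = (μ : ℤ) ∨ x % (n : ℤ) = (h : ℤ) * (μ : ℤ))})
    (hA : A = Astar ∪ X) :
    (IsAsympBasis A ∧ basisOrder A ≤ 2 * h + μ - 4 ∧
      basisOrder (A \ X) = h * (h - 1) * μ) ∧
    ∃ (A' X' : ℕ → Set ℤ) (h' : ℕ → ℕ),
      Filter.Tendsto h' Filter.atTop Filter.atTop ∧
      (∀ i, IsAsympBasis (A' i) ∧ basisOrder (A' i) = h' i ∧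
        X' i ⊆ A' i ∧ (X' i).ncard = 2 ∧ IsAsympBasis (A' i \ X' i) ∧
        IsLeast {m : ℤ | ∃ y ∈ A' i \ X' i, m = diam (X' i ∪ {y})} (μ : ℤ)) ∧
      Filter.Tendsto
        (fun i => (basisOrder (A' i \ X' i) : ℝ) / ((μ : ℝ) * (h' i : ℝ) ^ 2))
        Filter.atTop (nhds (1 / 4)) := by
  have hAeq : A = Afull n h μ := by rw [hA, hAstar, hX]; rfl
  constructor
  · refine ⟨⟨2 * h + μ - 4, ?_⟩, ?_, ?_⟩
    · rw [hAeq]; exact coversAfull hh hμ hn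
    · rw [hAeq]; exact order_Afull_le hh hμ hn
    · rw [hAeq, hX, Afull_diff hh hμ hn]; exact order_Ast hh hμ hn
  · have hn' : ∀ i : ℕ, (i + 5) * (i + 4) * μ + 1 = (i + 5) * ((i + 5) - 1) * μ + 1 :=
      fun i => by rw [show (i + 5) - 1 = i + 4 by omega]
    set A' : ℕ → Set ℤ := fun i => Afull ((i + 5) * (i + 4) * μ + 1) (i + 5) μ with hA'def
    refine ⟨A', fun _ => ({0, 1} : Set ℤ), fun i => basisOrder (A' i), ?_, ?_, ?_⟩
    · -- tendsto atTop
      have hlb : ∀ i : ℕ, 2 * i + 6 ≤ basisOrder (A' i) := fun i => by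
        have := order_Afull_ge (by omega) hμ (hn' i)
        show 2 * i + 6 ≤ basisOrder (Afull ((i + 5) * (i + 4) * μ + 1) (i + 5) μ)
        omega
      exact tendsto_atTop_mono (fun i => le_trans (by omega : i ≤ 2 * i + 6) (hlb i))
        tendsto_id
    · intro i
      refine ⟨⟨_, coversAfull (by omega) hμ (hn' i)⟩, rfl, Set.subset_union_right,
        Set.ncard_pair (by norm_num), ?_, isLeast_diam (by omega) hμ (hn' i)⟩
      rw [hA'def]
      simp only []
      rw [Afull_diff (by omega) hμ (hn' i)]
      exact ⟨_, coversAst (by omega) hμ (hn' i)⟩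
    · -- the limit
      have hord : ∀ i : ℕ, basisOrder (A' i \ ({0, 1} : Set ℤ)) = (i + 5) * (i + 4) * μ :=
        fun i => by
          rw [hA'def]
          simp only []
          rw [Afull_diff (by omega) hμ (hn' i), order_Ast (by omega) hμ (hn' i),
            show (i + 5) - 1 = i + 4 by omega]
      have hlb : ∀ i : ℕ, 2 * i + 6 ≤ basisOrder (A' i) := fun i => by
        have := order_Afull_ge (by omega) hμ (hn' i)
        show 2 * i + 6 ≤ basisOrder (Afull ((i + 5) * (i + 4) * μ + 1) (i + 5) μ)
        omega
      have hub : ∀ i : ℕ, basisOrder (A' i) ≤ 2 * i + μ + 6 := fun i => by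
        have := order_Afull_le (by omega) hμ (hn' i)
        show basisOrder (Afull ((i + 5) * (i + 4) * μ + 1) (i + 5) μ) ≤ 2 * i + μ + 6
        omega
      have hμR : (0 : ℝ) < (μ : ℝ) := by exact_mod_cast (by omega : 0 < μ)
      have key : Filter.Tendsto
          (fun i : ℕ => (((i + 5) * (i + 4) * μ : ℕ) : ℝ) / ((μ : ℝ) * (basisOrder (A' i) : ℝ) ^ 2))
          Filter.atTop (nhds (1 / 4)) := by
        refine tendsto_of_tendsto_of_tendsto_of_le_of_le
          (lim_aux 5 4 ((μ : ℝ) + 6) (by positivity)) (lim_aux 5 4 6 (by norm_num))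
          (fun i => ?_) (fun i => ?_)
        · -- lower bound
          have h1 : (2 * (i : ℝ) + 6) ≤ (basisOrder (A' i) : ℝ) := by
            have := hlb i; push_cast; exact_mod_cast this
          have h2 : (basisOrder (A' i) : ℝ) ≤ 2 * (i : ℝ) + ((μ : ℝ) + 6) := by
            have := hub i
            have h3 : ((basisOrder (A' i) : ℕ) : ℝ) ≤ ((2 * i + μ + 6 : ℕ) : ℝ) := by
              exact_mod_cast this
            push_cast at h3
            linarith
          have hopos : (0 : ℝ) < (basisOrder (A' i) : ℝ) := by linarith
          have hcast : (((i + 5) * (i + 4) * μ : ℕ) : ℝ)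
              = ((i : ℝ) + 5) * ((i : ℝ) + 4) * (μ : ℝ) := by push_cast; ring
          rw [hcast, show ((i : ℝ) + 5) * ((i : ℝ) + 4) * (μ : ℝ) = (μ : ℝ) * (((i : ℝ) + 5) * ((i : ℝ) + 4)) by ring,
            mul_div_mul_left _ _ (ne_of_gt hμR)]
          have hx0 : (0 : ℝ) ≤ ((i : ℝ) + 5) * ((i : ℝ) + 4) := by positivity
          gcongr
          all_goals linarith
        · -- upper bound
          have h1 : (2 * (i : ℝ) + 6) ≤ (basisOrder (A' i) : ℝ) := by
            have := hlb i; push_cast; exact_mod_cast this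
          have hcast : (((i + 5) * (i + 4) * μ : ℕ) : ℝ)
              = ((i : ℝ) + 5) * ((i : ℝ) + 4) * (μ : ℝ) := by push_cast; ring
          rw [hcast, show ((i : ℝ) + 5) * ((i : ℝ) + 4) * (μ : ℝ) = (μ : ℝ) * (((i : ℝ) + 5) * ((i : ℝ) + 4)) by ring,
            mul_div_mul_left _ _ (ne_of_gt hμR)]
          have hx0 : (0 : ℝ) ≤ ((i : ℝ) + 5) * ((i : ℝ) + 4) := by positivity
          gcongr
          all_goals first | norm_num | linarith
      refine key.congr fun i => ?_
      rw [hord i]
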